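/- Define the canard function ρ_Sc : [0,1] → ℝ by ρ_Sc(ξ) = ρ_c^+(ξ) for 0 ≤ ξ ≤ ξ* and ρ_Sc(ξ) = ρ_c^−(ξ) for ξ* ≤ ξ ≤ 1. Then ρ_Sc is differentiable on (0,1), satisfies the reduced ODE (1 − 2ρ_Sc(ξ)) ρ_Sc'(ξ) = −g(ξ) ρ_Sc(ξ)(1 − ρ_Sc(ξ)) for all ξ ∈ (0,1), and its derivative at the canard point is ρ_Sc'(ξ*) = −(1/2)√(k''(ξ*)/(2 k(ξ*))); in particular the singular canard passes smoothly through the folded-saddle point (ξ*, 1/2), crossing from ρ > 1/2 to ρ < 1/2. -/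

import Mathlib

open Set

/-- Upper canard branch `ρ_c^+(ξ) = (1/2)(1 + √(1 - k(ξ*)/k(ξ)))`. -/
noncomputable def rhoCPlus (k : ℝ → ℝ) (ξs ξ : ℝ) : ℝ :=
  1/2 * (1 + Real.sqrt (1 - k ξs / k ξ))

/-- Lower canard branch `ρ_c^-(ξ) = (1/2)(1 - √(1 - k(ξ*)/k(ξ)))`. -/
noncomputable def rhoCMinus (k : ℝ → ℝ) (ξs ξ : ℝ) : ℝ :=
  1/2 * (1 - Real.sqrt (1 - k ξs / k ξ))

/-- The singular canard `ρ_Sc`: upper branch before the bottleneck, lower branch after. -/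
noncomputable def rhoSc (k : ℝ → ℝ) (ξs ξ : ℝ) : ℝ :=
  if ξ ≤ ξs then rhoCPlus k ξs ξ else rhoCMinus k ξs ξ

open Filter Topology

lemma hasDerivAt_one_sub_div (k : ℝ → ℝ) (K ξ : ℝ) (hd : DifferentiableAt ℝ k ξ)
    (hne : k ξ ≠ 0) :
    HasDerivAt (fun x => 1 - K / k x) (K * deriv k ξ / (k ξ)^2) ξ := by
  have h1 : HasDerivAt (fun x => K / k x)
      ((0 * k ξ - K * deriv k ξ) / (k ξ)^2) ξ :=
    (hasDerivAt_const ξ K).div hd.hasDerivAt hne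
  have h2 := (hasDerivAt_const ξ (1:ℝ)).sub h1
  refine h2.congr_deriv ?_
  field_simp
  ring

lemma hasDerivAt_rhoCPlus' (k : ℝ → ℝ) (ξs ξ : ℝ) (hd : DifferentiableAt ℝ k ξ)
    (hne : 0 < k ξ) (hh : 0 < 1 - k ξs / k ξ) :
    HasDerivAt (rhoCPlus k ξs)
      (k ξs * deriv k ξ / (4 * (k ξ)^2 * Real.sqrt (1 - k ξs / k ξ))) ξ := by
  have h1 := hasDerivAt_one_sub_div k (k ξs) ξ hd hne.ne'
  have h3 := ((hasDerivAt_const ξ (1:ℝ)).add (h1.sqrt hh.ne')).const_mul (1/2 : ℝ)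
  have hr : rhoCPlus k ξs = fun x => 1/2 * (1 + Real.sqrt (1 - k ξs / k x)) := rfl
  rw [hr]
  refine h3.congr_deriv ?_
  have hs : Real.sqrt (1 - k ξs / k ξ) ≠ 0 := Real.sqrt_ne_zero'.mpr hh
  field_simp
  ring

lemma hasDerivAt_rhoCMinus' (k : ℝ → ℝ) (ξs ξ : ℝ) (hd : DifferentiableAt ℝ k ξ)
    (hne : 0 < k ξ) (hh : 0 < 1 - k ξs / k ξ) :
    HasDerivAt (rhoCMinus k ξs)
      (-(k ξs * deriv k ξ / (4 * (k ξ)^2 * Real.sqrt (1 - k ξs / k ξ)))) ξ := by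
  have h1 := hasDerivAt_one_sub_div k (k ξs) ξ hd hne.ne'
  have h3 := ((hasDerivAt_const ξ (1:ℝ)).sub (h1.sqrt hh.ne')).const_mul (1/2 : ℝ)
  have hr : rhoCMinus k ξs = fun x => 1/2 * (1 - Real.sqrt (1 - k ξs / k x)) := rfl
  rw [hr]
  refine h3.congr_deriv ?_
  have hs : Real.sqrt (1 - k ξs / k ξ) ≠ 0 := Real.sqrt_ne_zero'.mpr hh
  field_simp
  ring
/-- The canard function `ρ_Sc` is differentiable on `(0,1)`, satisfies the
reduced ODE `(1 - 2ρ)ρ' = -g ρ(1-ρ)` there, has derivative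
`-(1/2)√(k''(ξ*)/(2k(ξ*)))` at the canard point `ξ*`, and crosses from `ρ > 1/2`
(for `ξ < ξ*`) to `ρ < 1/2` (for `ξ > ξ*`): it passes smoothly through the folded saddle. -/
theorem canard_solution_through_folded_saddle
    (k : ℝ → ℝ) (ξs : ℝ)
    (hk : ContDiff ℝ 2 k)
    (hkpos : ∀ x ∈ Icc (0:ℝ) 1, 0 < k x)
    (hξs : ξs ∈ Ioo (0:ℝ) 1)
    (hmin : ∀ x ∈ Icc (0:ℝ) 1, x ≠ ξs → k ξs < k x)
    (hk's : deriv k ξs = 0)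
    (hk''s : 0 < deriv (deriv k) ξs) :
    ∃ d : ℝ → ℝ,
      (∀ ξ ∈ Ioo (0:ℝ) 1,
        HasDerivAt (rhoSc k ξs) (d ξ) ξ ∧
        (1 - 2 * rhoSc k ξs ξ) * d ξ =
          -(deriv k ξ / k ξ) * rhoSc k ξs ξ * (1 - rhoSc k ξs ξ)) ∧
      d ξs = -(1/2) * Real.sqrt (deriv (deriv k) ξs / (2 * k ξs)) ∧
      (∀ ξ ∈ Ioo (0:ℝ) 1, ξ < ξs → 1/2 < rhoSc k ξs ξ) ∧
      (∀ ξ ∈ Ioo (0:ℝ) 1, ξs < ξ → rhoSc k ξs ξ < 1/2) := by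
  obtain ⟨hξs0, hξs1⟩ := hξs
  have hξsIcc : ξs ∈ Icc (0:ℝ) 1 := ⟨hξs0.le, hξs1.le⟩
  have hK : 0 < k ξs := hkpos ξs hξsIcc
  have hdk : Differentiable ℝ k := hk.differentiable (by norm_num)
  have hpos : ∀ ξ ∈ Ioo (0:ℝ) 1, 0 < k ξ := fun ξ hξ => hkpos ξ ⟨hξ.1.le, hξ.2.le⟩
  have hhpos : ∀ ξ ∈ Ioo (0:ℝ) 1, ξ ≠ ξs → 0 < 1 - k ξs / k ξ := by
    intro ξ hξ hne
    rw [sub_pos, div_lt_one (hpos ξ hξ)]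
    exact hmin ξ ⟨hξ.1.le, hξ.2.le⟩ hne
  have hrs : rhoSc k ξs ξs = 1/2 := by
    simp [rhoSc, rhoCPlus, div_self hK.ne']
  refine ⟨fun ξ => if ξ = ξs then -(1/2) * Real.sqrt (deriv (deriv k) ξs / (2 * k ξs)) else
      (if ξ < ξs then 1 else -1) *
        (k ξs * deriv k ξ / (4 * (k ξ)^2 * Real.sqrt (1 - k ξs / k ξ))), ?_, by simp, ?_, ?_⟩
  · intro ξ hξ
    rcases lt_trichotomy ξ ξs with hlt | heq | hgt
    · have hh := hhpos ξ hξ hlt.ne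
      have hkξ := hpos ξ hξ
      have hbr := hasDerivAt_rhoCPlus' k ξs ξ (hdk ξ) hkξ hh
      have hev : rhoSc k ξs =ᶠ[nhds ξ] rhoCPlus k ξs := by
        filter_upwards [Iio_mem_nhds hlt] with x hx
        simp only [rhoSc, if_pos (le_of_lt (mem_Iio.mp hx))]
      have hrx : rhoSc k ξs ξ = rhoCPlus k ξs ξ := by simp [rhoSc, hlt.le]
      refine ⟨?_, ?_⟩
      · beta_reduce
        rw [if_neg hlt.ne, if_pos hlt, one_mul]
        exact hbr.congr_of_eventuallyEq hev
      · beta_reduce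
        rw [if_neg hlt.ne, if_pos hlt, one_mul, hrx]
        simp only [rhoCPlus]
        set s := Real.sqrt (1 - k ξs / k ξ) with hsdef
        have hs2 : s ^ 2 = 1 - k ξs / k ξ := Real.sq_sqrt hh.le
        have hsne : s ≠ 0 := Real.sqrt_ne_zero'.mpr hh
        have hkey : k ξs = k ξ * (1 - s^2) := by
          rw [hs2]; field_simp; ring
        rw [hkey]
        field_simp
        ring
    · subst heq
      refine ⟨?_, ?_⟩
      · beta_reduce
        rw [if_pos rfl]
        -- derivative at the canard point via slope limit
        have hdk2 : DifferentiableAt ℝ (deriv k) ξ := by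
          have h21 : (2 : WithTop ℕ∞) = 1 + 1 := rfl
          rw [h21] at hk
          have h2 : ContDiff ℝ 1 (deriv k) := (contDiff_succ_iff_deriv.mp hk).2.2
          exact h2.differentiable one_ne_zero ξ
        have hC : HasDerivAt (fun x => k ξ * deriv k x / (k x)^2)
            (deriv (deriv k) ξ / k ξ) ξ := by
          have h1 : HasDerivAt (fun x => k ξ * deriv k x) (k ξ * deriv (deriv k) ξ) ξ :=
            hdk2.hasDerivAt.const_mul (k ξ)
          have h2 : HasDerivAt (fun x => (k x)^2) ((2:ℕ) * k ξ ^ 1 * deriv k ξ) ξ :=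
            (hdk ξ).hasDerivAt.pow 2
          have h3 := h1.div h2 (by positivity)
          refine h3.congr_deriv ?_
          rw [hk's]
          field_simp
          ring
        have hslope : Tendsto (fun x => (k ξ * deriv k x / (k x)^2) / (x - ξ))
            (nhdsWithin ξ {ξ}ᶜ) (nhds (deriv (deriv k) ξ / k ξ)) := by
          have h4 := hasDerivAt_iff_tendsto_slope.mp hC
          refine h4.congr fun x => ?_
          rw [slope_def_field, hk's]
          simp
        have hU : Ioo (0:ℝ) 1 ∈ nhds ξ := Ioo_mem_nhds hξs0 hξs1
        have htend2 : Tendsto (fun x => (1 - k ξ / k x) / (x - ξ)^2) (nhdsWithin ξ {ξ}ᶜ)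
            (nhds (deriv (deriv k) ξ / k ξ / 2)) := by
          have hff' : ∀ᶠ x in nhdsWithin ξ {ξ}ᶜ, HasDerivAt (fun y => 1 - k ξ / k y)
              (k ξ * deriv k x / (k x)^2) x := by
            filter_upwards [nhdsWithin_le_nhds hU] with x hx
            exact hasDerivAt_one_sub_div k (k ξ) x (hdk x) (hpos x hx).ne'
          have hgg' : ∀ᶠ x in nhdsWithin ξ {ξ}ᶜ, HasDerivAt (fun y => (y - ξ)^2)
              (2*(x - ξ)) x := by
            filter_upwards with x
            have h5 := ((hasDerivAt_id x).sub_const ξ).pow 2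
            exact (by simpa using h5 : HasDerivAt ((fun x => x - ξ) ^ 2) (2 * (x - ξ)) x)
          have hg' : ∀ᶠ x in nhdsWithin ξ {ξ}ᶜ, 2*(x - ξ) ≠ 0 := by
            filter_upwards [self_mem_nhdsWithin] with x hx
            simpa [sub_eq_zero] using hx
          have hfa : Tendsto (fun x => 1 - k ξ / k x) (nhdsWithin ξ {ξ}ᶜ) (nhds 0) := by
            have hcont : ContinuousAt (fun x => 1 - k ξ / k x) ξ := by
              apply ContinuousAt.sub continuousAt_const
              exact ContinuousAt.div continuousAt_const (hdk ξ).continuousAt hK.ne'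
            have h6 : Tendsto (fun x => 1 - k ξ / k x) (nhdsWithin ξ {ξ}ᶜ)
                (nhds (1 - k ξ / k ξ)) := hcont.tendsto.mono_left nhdsWithin_le_nhds
            simpa [div_self hK.ne'] using h6
          have hga : Tendsto (fun x : ℝ => (x - ξ)^2) (nhdsWithin ξ {ξ}ᶜ) (nhds 0) := by
            have hc2 : ContinuousAt (fun x : ℝ => (x - ξ)^2) ξ := by fun_prop
            simpa using hc2.tendsto.mono_left nhdsWithin_le_nhds
          have hdiv : Tendsto (fun x => (k ξ * deriv k x / (k x)^2) / (2*(x - ξ)))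
              (nhdsWithin ξ {ξ}ᶜ) (nhds (deriv (deriv k) ξ / k ξ / 2)) := by
            refine (hslope.div_const 2).congr fun x => ?_
            rw [div_div]
            ring
          exact HasDerivAt.lhopital_zero_nhdsNE hff' hgg' hg' hfa hga hdiv
        have hsl : ∀ᶠ x in nhdsWithin ξ {ξ}ᶜ, (fun x =>
            -(1/2) * Real.sqrt ((1 - k ξ / k x) / (x - ξ)^2)) x = slope (rhoSc k ξ) ξ x := by
          filter_upwards [nhdsWithin_le_nhds hU, self_mem_nhdsWithin] with x hx hne
          have hne' : x ≠ ξ := hne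
          have hh := hhpos x hx hne'
          have htne : x - ξ ≠ 0 := sub_ne_zero.mpr hne'
          have hsq : Real.sqrt ((1 - k ξ / k x) / (x - ξ)^2)
              = Real.sqrt (1 - k ξ / k x) / |x - ξ| := by
            rw [Real.sqrt_div hh.le, Real.sqrt_sq_eq_abs]
          rw [slope_def_field, hrs, hsq]
          rcases hne'.lt_or_gt with hlt | hgt
          · have hx' : rhoSc k ξ x = 1/2*(1 + Real.sqrt (1 - k ξ / k x)) := by
              simp [rhoSc, hlt.le, rhoCPlus]
            rw [hx', abs_of_neg (sub_neg.mpr hlt), div_neg]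
            ring
          · have hx' : rhoSc k ξ x = 1/2*(1 - Real.sqrt (1 - k ξ / k x)) := by
              simp [rhoSc, not_le.mpr hgt, rhoCMinus]
            rw [hx', abs_of_pos (sub_pos.mpr hgt)]
            ring
        have hfinal : Tendsto (fun x => -(1/2) * Real.sqrt ((1 - k ξ / k x) / (x - ξ)^2))
            (nhdsWithin ξ {ξ}ᶜ)
            (nhds (-(1/2) * Real.sqrt (deriv (deriv k) ξ / (2 * k ξ)))) := by
          have hc := (Real.continuous_sqrt.continuousAt
            (x := deriv (deriv k) ξ / k ξ / 2)).tendsto.comp htend2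
          have h7 := hc.const_mul (-(1/2) : ℝ)
          have h8 : deriv (deriv k) ξ / k ξ / 2 = deriv (deriv k) ξ / (2 * k ξ) := by ring
          rw [h8] at h7
          simpa [Function.comp] using h7
        exact hasDerivAt_iff_tendsto_slope.mpr (Filter.Tendsto.congr' hsl hfinal)
      · beta_reduce
        rw [if_pos rfl, hrs, hk's]
        norm_num
    · have hh := hhpos ξ hξ hgt.ne'
      have hkξ := hpos ξ hξ
      have hbr := hasDerivAt_rhoCMinus' k ξs ξ (hdk ξ) hkξ hh
      have hev : rhoSc k ξs =ᶠ[nhds ξ] rhoCMinus k ξs := by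
        filter_upwards [Ioi_mem_nhds hgt] with x hx
        simp only [rhoSc, if_neg (not_le.mpr (mem_Ioi.mp hx))]
      have hrx : rhoSc k ξs ξ = rhoCMinus k ξs ξ := by
        simp [rhoSc, not_le.mpr hgt]
      refine ⟨?_, ?_⟩
      · beta_reduce
        rw [if_neg hgt.ne', if_neg (not_lt.mpr hgt.le), neg_one_mul]
        exact hbr.congr_of_eventuallyEq hev
      · beta_reduce
        rw [if_neg hgt.ne', if_neg (not_lt.mpr hgt.le), neg_one_mul, hrx]
        simp only [rhoCMinus]
        set s := Real.sqrt (1 - k ξs / k ξ) with hsdef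
        have hs2 : s ^ 2 = 1 - k ξs / k ξ := Real.sq_sqrt hh.le
        have hsne : s ≠ 0 := Real.sqrt_ne_zero'.mpr hh
        have hkey : k ξs = k ξ * (1 - s^2) := by
          rw [hs2]; field_simp; ring
        rw [hkey]
        field_simp
        ring
  · intro ξ hξ hlt
    have hh := hhpos ξ hξ hlt.ne
    have hrx : rhoSc k ξs ξ = rhoCPlus k ξs ξ := by simp [rhoSc, hlt.le]
    rw [hrx]
    simp only [rhoCPlus]
    have := Real.sqrt_pos.mpr hh
    linarith
  · intro ξ hξ hgt
    have hh := hhpos ξ hξ hgt.ne'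
    have hrx : rhoSc k ξs ξ = rhoCMinus k ξs ξ := by simp [rhoSc, not_le.mpr hgt]
    rw [hrx]
    simp only [rhoCMinus]
    have := Real.sqrt_pos.mpr hh
    linarith
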